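/- For each l ∈ {1,2,3} and each sign δ ∈ {+1,−1}, the idempotent P_l^δ satisfies the inhomogeneous proper-value equation (K+1)(P_l^δ) = 2 P_l^δ − 1 (proper value 2, co-value −1). -/
import Mathlib


open scoped TensorProduct

noncomputable section

/-- The standard positive-definite quadratic form on `ℝ³`. -/
abbrev Q3 : QuadraticForm ℝ (Fin 3 → ℝ) :=
  QuadraticMap.weightedSumSquares ℝ (fun _ : Fin 3 => (1 : ℝ))

/-- The Clifford algebra of 3-dimensional Euclidean space. -/
abbrev Cl3 : Type := CliffordAlgebra Q3

/-- The tensor product of two copies of `Cl3`, as ℝ-algebras. -/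
abbrev A3 : Type := Cl3 ⊗[ℝ] Cl3

/-- The generators `e₁, e₂, e₃` (indexed by `Fin 3`). -/
def e (l : Fin 3) : Cl3 := CliffordAlgebra.ι Q3 (Pi.single l 1)

/-- `X_l := e_l ⊗ e_l`. -/
def X (l : Fin 3) : A3 := e l ⊗ₜ[ℝ] e l

/-- `w^i := (e_j e_k) ⊗ 1` for `(i,j,k)` a cyclic permutation of the indices. -/
def w (i : Fin 3) : A3 := (e (i + 1) * e (i + 2)) ⊗ₜ[ℝ] (1 : Cl3)

/-- The (ℝ-linear) operators `J_l(U) := (1/2)(w^l U − U w^l)`. -/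
def J (l : Fin 3) (U : A3) : A3 := (1/2 : ℝ) • (w l * U - U * w l)

/-- Kähler's total angular momentum operator `K+1`. -/
def K1 (U : A3) : A3 := J 0 U * w 0 + J 1 U * w 1 + J 2 U * w 2

/-- The idempotents `I_{ij}^ε := (1/2)(1 + ε X_i X_j)`. -/
def Iem (i j : Fin 3) (ε : ℝ) : A3 := (1/2 : ℝ) • ((1 : A3) + ε • (X i * X j))

/-- The idempotents `P_l^δ := (1/2)(1 + δ X_l)`. -/
def P (l : Fin 3) (δ : ℝ) : A3 := (1/2 : ℝ) • ((1 : A3) + δ • X l)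

lemma e_sq (l : Fin 3) : e l * e l = 1 := by
  rw [e, CliffordAlgebra.ι_sq_scalar]
  simp [QuadraticMap.weightedSumSquares_apply, Pi.single_apply, Finset.sum_ite_eq']

lemma e_anti {l m : Fin 3} (h : l ≠ m) : e l * e m = -(e m * e l) := by
  have h2 := CliffordAlgebra.ι_mul_ι_add_swap (Q := Q3) (Pi.single l 1) (Pi.single m 1)
  have hp : QuadraticMap.polar (⇑Q3) (Pi.single l 1) (Pi.single m 1) = 0 := by
    simp [QuadraticMap.polar, QuadraticMap.weightedSumSquares_apply, Pi.single_apply]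
    fin_cases l <;> fin_cases m <;> simp_all (config := {decide := true}) [Fin.sum_univ_three]
  rw [hp, map_zero] at h2
  rw [e, e]
  exact eq_neg_of_add_eq_zero_left h2

lemma e_sq' (l : Fin 3) (x : Cl3) : e l * (e l * x) = x := by
  rw [← mul_assoc, e_sq, one_mul]

lemma e_anti' {l m : Fin 3} (h : l ≠ m) (x : Cl3) : e m * (e l * x) = -(e l * (e m * x)) := by
  rw [← mul_assoc, e_anti (Ne.symm h), neg_mul, mul_assoc]

lemma s10 : e 1 * e 0 = -(e 0 * e 1) := e_anti (by decide)
lemma s20 : e 2 * e 0 = -(e 0 * e 2) := e_anti (by decide)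
lemma s21 : e 2 * e 1 = -(e 1 * e 2) := e_anti (by decide)
lemma s10' (x : Cl3) : e 1 * (e 0 * x) = -(e 0 * (e 1 * x)) := e_anti' (by decide) x
lemma s20' (x : Cl3) : e 2 * (e 0 * x) = -(e 0 * (e 2 * x)) := e_anti' (by decide) x
lemma s21' (x : Cl3) : e 2 * (e 1 * x) = -(e 1 * (e 2 * x)) := e_anti' (by decide) x

lemma w0_def : w 0 = (e 1 * e 2) ⊗ₜ[ℝ] 1 := rfl
lemma w1_def : w 1 = (e 2 * e 0) ⊗ₜ[ℝ] 1 := rfl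
lemma w2_def : w 2 = (e 0 * e 1) ⊗ₜ[ℝ] 1 := rfl

lemma K1_X (l : Fin 3) : K1 (X l) = (2:ℝ) • X l := by
  have hl : l = 0 ∨ l = 1 ∨ l = 2 := by fin_cases l <;> simp
  rcases hl with rfl | rfl | rfl <;>
  · simp only [K1, J, X, w0_def, w1_def, w2_def, smul_mul_assoc, sub_mul,
      Algebra.TensorProduct.tmul_mul_tmul, mul_one, one_mul, mul_assoc,
      e_sq, e_sq', s10, s20, s21, s10', s20', s21', mul_neg, neg_mul, neg_neg]
    simp only [TensorProduct.neg_tmul]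
    module

lemma K1_one : K1 (1 : A3) = 0 := by
  simp [K1, J]

lemma K1_smul (r : ℝ) (U : A3) : K1 (r • U) = r • K1 U := by
  simp only [K1, J, mul_smul_comm, smul_mul_assoc, smul_sub, smul_add, smul_smul,
    sub_mul]
  module

lemma K1_add (U V : A3) : K1 (U + V) = K1 U + K1 V := by
  simp only [K1, J, mul_add, add_mul, smul_add, smul_sub, sub_mul]
  module

/-- For each `l` and each sign `δ`, the idempotent `P_l^δ` satisfies the
inhomogeneous proper-value equation `(K+1)(P_l^δ) = 2 P_l^δ − 1`. -/
theorem stmt5 (l : Fin 3) (δ : ℝ) (hδ : δ = 1 ∨ δ = -1) :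
    K1 (P l δ) = 2 * P l δ - 1 := by
  rw [P, K1_smul, K1_add, K1_one, K1_smul, K1_X, two_mul]
  module
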